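/- Let (S, f) be a Frobenius GNS in ℕ_0^d, regarded as a subset of ℤ^d via the natural embedding ℕ_0^d ⊆ ℤ^d, and set Z_S = {x ∈ ℤ^d : x ≤ f componentwise} ∪ ℕ_0^d. Then S is almost symmetric if and only if for every h ∈ Z_S ∖ S, either f − h ∈ S or f − h ∈ PF(S). -/

import Mathlib

open scoped BigOperators

/-- A generalized numerical semigroup: a submonoid of `ℕ^d` with finite complement. -/
def IsGNS {d : ℕ} (S : Set (Fin d → ℕ)) : Prop :=
  (0 : Fin d → ℕ) ∈ S ∧ (∀ x y : Fin d → ℕ, x ∈ S → y ∈ S → x + y ∈ S) ∧ Sᶜ.Finite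

/-- The genus: number of gaps. -/
noncomputable def genus {d : ℕ} (S : Set (Fin d → ℕ)) : ℕ := Sᶜ.ncard

/-- Pseudo-Frobenius elements. -/
def PF {d : ℕ} (S : Set (Fin d → ℕ)) : Set (Fin d → ℕ) :=
  {h | h ∉ S ∧ ∀ s ∈ S, s ≠ 0 → h + s ∈ S}

/-- The type: number of pseudo-Frobenius elements. -/
noncomputable def typ {d : ℕ} (S : Set (Fin d → ℕ)) : ℕ := (PF S).ncard

/-- Maximal elements of a set with respect to a relation. -/
def Maximals {α : Type*} (le : α → α → Prop) (X : Set α) : Set α :=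
  {x ∈ X | ∀ y ∈ X, le x y → x = y}

/-- `f` is the unique maximal element of the set of gaps w.r.t. the componentwise order. -/
def IsFrobenius {d : ℕ} (S : Set (Fin d → ℕ)) (f : Fin d → ℕ) : Prop :=
  Maximals (· ≤ ·) Sᶜ = {f}

/-- Almost symmetric: `2 g(S) + 1 - t(S) = ∏ (h i + 1)` for some gap `h`. -/
def AlmostSymmetric {d : ℕ} (S : Set (Fin d → ℕ)) : Prop :=
  ∃ h ∉ S, 2 * genus S + 1 = typ S + ∏ i, (h i + 1)

/-- Special gaps. -/
def SG {d : ℕ} (S : Set (Fin d → ℕ)) : Set (Fin d → ℕ) :=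
  {h ∈ PF S | h + h ∈ S}

/-- The partial order `≤_S` : `y ≤_S x` iff `x - y ∈ S`. -/
def leS {d : ℕ} (S : Set (Fin d → ℕ)) (x y : Fin d → ℕ) : Prop :=
  ∃ s ∈ S, x + s = y

/-- The Apéry set of `S` with respect to `n`. -/
def Ap {d : ℕ} (S : Set (Fin d → ℕ)) (n : Fin d → ℕ) : Set (Fin d → ℕ) :=
  {s ∈ S | ¬ ∃ u ∈ S, u + n = s}

/-- The reduced Apéry set of `S` with respect to `n`. -/
def Cred {d : ℕ} (S : Set (Fin d → ℕ)) (n : Fin d → ℕ) : Set (Fin d → ℕ) :=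
  {s ∈ Ap S n | ∃ h, h ∉ S ∧ s ≤ h + n}

/-- A monomial order on `ℕ^d` given by its strict-order relation. -/
def IsMonomialOrder (d : ℕ) (lt : (Fin d → ℕ) → (Fin d → ℕ) → Prop) : Prop :=
  (∀ a, ¬ lt a a) ∧ (∀ a b c, lt a b → lt b c → lt a c) ∧
  (∀ a b, a ≠ b → lt a b ∨ lt b a) ∧
  (∀ u a b, lt a b → lt (a + u) (b + u)) ∧
  (∀ a, a ≠ (0 : Fin d → ℕ) → lt 0 a)

/-- Minimal generator of a GNS. -/
def IsMinGen {d : ℕ} (S : Set (Fin d → ℕ)) (x : Fin d → ℕ) : Prop :=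
  x ∈ S ∧ x ≠ 0 ∧ ∀ y ∈ S, ∀ z ∈ S, y ≠ 0 → z ≠ 0 → y + z ≠ x

/-- Irreducible GNS: not an intersection of two GNSs properly containing it. -/
def GNSIrreducible {d : ℕ} (S : Set (Fin d → ℕ)) : Prop :=
  ¬ ∃ S₁ S₂ : Set (Fin d → ℕ), IsGNS S₁ ∧ IsGNS S₂ ∧ S ⊂ S₁ ∧ S ⊂ S₂ ∧ S = S₁ ∩ S₂

/-- Pseudo-symmetric: `PF S = {f, f/2}`. -/
def PseudoSymmetric {d : ℕ} (S : Set (Fin d → ℕ)) : Prop :=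
  ∃ f q : Fin d → ℕ, f ≠ q ∧ q + q = f ∧ PF S = {f, q}

section Aux

variable {d : ℕ} {S : Set (Fin d → ℕ)} {f : Fin d → ℕ}

lemma frob_notin (hf : IsFrobenius S f) : f ∉ S := by
  have h : f ∈ Maximals (· ≤ ·) Sᶜ := by rw [hf]; rfl
  exact h.1

lemma gap_le_frob (hS : IsGNS S) (hf : IsFrobenius S f) {h : Fin d → ℕ} (hh : h ∉ S) :
    h ≤ f := by
  classical
  have hTfin : ({x | x ∉ S ∧ h ≤ x} : Set (Fin d → ℕ)).Finite :=
    hS.2.2.subset (fun x hx => hx.1)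
  have hTne : ({x | x ∉ S ∧ h ≤ x} : Set (Fin d → ℕ)).Nonempty := ⟨h, hh, le_refl h⟩
  obtain ⟨m, hm, hmax⟩ := Set.Finite.exists_maximalFor id _ hTfin hTne
  have hmMax : m ∈ Maximals (· ≤ ·) Sᶜ := by
    refine ⟨hm.1, fun y hy hmy => ?_⟩
    exact le_antisymm hmy (hmax ⟨hy, le_trans hm.2 hmy⟩ hmy)
  rw [hf] at hmMax
  have hmf : m = f := hmMax
  exact hmf ▸ hm.2

lemma frob_pf (hS : IsGNS S) (hf : IsFrobenius S f) : f ∈ PF S := by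
  refine ⟨frob_notin hf, fun s hs hs0 => ?_⟩
  by_contra hfs
  have hle := gap_le_frob hS hf hfs
  apply hs0
  funext i
  have h1 : f i + s i ≤ f i := hle i
  simpa using Nat.le_antisymm (by omega) (Nat.zero_le _)

lemma iic_card (f : Fin d → ℕ) : (Set.Iic f).ncard = ∏ i, (f i + 1) := by
  have h1 : Set.Iic f = Set.univ.pi (fun i => Set.Iic (f i)) := by
    ext x; simp [Pi.le_def, Set.mem_pi]
  rw [h1]
  have h2 : (Set.univ.pi (fun i => Set.Iic (f i))).ncard
      = Nat.card (Set.univ.pi (fun i => Set.Iic (f i))) := rfl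
  rw [h2, Nat.card_congr (Equiv.Set.univPi (fun i => Set.Iic (f i))), Nat.card_pi]
  refine Finset.prod_congr rfl fun i _ => ?_
  have : Nat.card (Set.Iic (f i)) = (Set.Iic (f i)).ncard := rfl
  rw [this]
  simp [Set.ncard_eq_toFinset_card']

lemma natChar (hS : IsGNS S) (hf : IsFrobenius S f) :
    AlmostSymmetric S ↔ ∀ h, h ∉ S → (f - h ∈ S ∨ f - h ∈ PF S) := by
  classical
  have hfS := frob_notin hf
  have hgap : ∀ {h : Fin d → ℕ}, h ∉ S → h ≤ f := fun hh => gap_le_frob hS hf hh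
  have hHfin : (Sᶜ).Finite := hS.2.2
  have hsub_add : ∀ {h : Fin d → ℕ}, h ≤ f → h + (f - h) = f := by
    intro h hle; funext i
    have h0 : h i ≤ f i := hle i
    simp only [Pi.add_apply, Pi.sub_apply]
    omega
  have hsub_sub : ∀ {h : Fin d → ℕ}, h ≤ f → f - (f - h) = h := by
    intro h hle; funext i
    have h0 : h i ≤ f i := hle i
    simp only [Pi.sub_apply]
    omega
  have hsub_le : ∀ h : Fin d → ℕ, f - h ≤ f := fun h i => Nat.sub_le _ _
  have hLfin : (Set.Iic f).Finite := Set.finite_Iic f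
  set A : Set (Fin d → ℕ) := S ∩ Set.Iic f with hA
  set B : Set (Fin d → ℕ) := {h | h ∉ S ∧ f - h ∉ S} with hB
  set C : Set (Fin d → ℕ) := {h | h ∉ S ∧ f - h ∈ S} with hC
  have hBfin : B.Finite := hHfin.subset (fun x hx => hx.1)
  have hAfin : A.Finite := hLfin.subset Set.inter_subset_right
  have hLsplit : Set.Iic f = A ∪ Sᶜ := by
    ext x
    constructor
    · intro hx
      by_cases hxs : x ∈ S
      · exact Or.inl ⟨hxs, hx⟩
      · exact Or.inr hxs
    · rintro (⟨_, hx⟩ | hx)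
      · exact hx
      · exact hgap hx
  have hdisj : Disjoint A (Sᶜ) := by
    rw [Set.disjoint_left]
    rintro x ⟨hxS, _⟩ hxc
    exact hxc hxS
  have h1 : ∏ i, (f i + 1) = A.ncard + genus S := by
    rw [← iic_card f, hLsplit, Set.ncard_union_eq hdisj hAfin hHfin]; rfl
  have hCimg : C = (fun s => f - s) '' A := by
    ext h
    constructor
    · rintro ⟨hh, hfh⟩
      exact ⟨f - h, ⟨hfh, hsub_le h⟩, hsub_sub (hgap hh)⟩
    · rintro ⟨s, ⟨hsS, hsle⟩, rfl⟩
      refine ⟨fun hcon => hfS ?_, ?_⟩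
      · have := hS.2.1 s (f - s) hsS hcon
        rwa [hsub_add hsle] at this
      · rw [hsub_sub hsle]; exact hsS
  have hinj : Set.InjOn (fun s => f - s) A := by
    intro a ha b hb hab
    funext i
    have h1 : a i ≤ f i := ha.2 i
    have h2 : b i ≤ f i := hb.2 i
    have h3 : f i - a i = f i - b i := congrFun hab i
    omega
  have hCcard : C.ncard = A.ncard := by rw [hCimg, Set.ncard_image_of_injOn hinj]
  have hHsplit : Sᶜ = B ∪ C := by
    ext x
    constructor
    · intro hx
      by_cases hfx : f - x ∈ S
      · exact Or.inr ⟨hx, hfx⟩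
      · exact Or.inl ⟨hx, hfx⟩
    · rintro (hx | hx) <;> exact hx.1
  have hBCdisj : Disjoint B C := by
    rw [Set.disjoint_left]
    rintro x ⟨_, hx2⟩ ⟨_, hy2⟩
    exact hx2 hy2
  have hCfin : C.Finite := hHfin.subset (fun x hx => hx.1)
  have h2 : genus S = B.ncard + C.ncard := by
    rw [genus, hHsplit, Set.ncard_union_eq hBCdisj hBfin hCfin]
  have hkey : B.ncard + ∏ i, (f i + 1) = 2 * genus S := by omega
  have hPFf : f ∈ PF S := frob_pf hS hf
  have hPFfin : (PF S).Finite := hHfin.subset (fun p hp => hp.1)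
  have hPF'B : PF S \ {f} ⊆ B := by
    rintro p ⟨hp, hpf⟩
    refine ⟨hp.1, fun hcon => ?_⟩
    have hple := hgap hp.1
    have hne0 : f - p ≠ 0 := by
      intro h0
      apply hpf
      have : p = f := by
        funext i
        have ha := congrFun h0 i
        have hb : p i ≤ f i := hple i
        simp only [Pi.sub_apply, Pi.zero_apply] at ha
        omega
      exact this ▸ rfl
    have hfin := hp.2 (f - p) hcon hne0
    rw [hsub_add hple] at hfin
    exact hfS hfin
  have hfB : f ∉ B := by
    intro hcon
    apply hcon.2
    have : f - f = (0 : Fin d → ℕ) := by funext i; simp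
    rw [this]
    exact hS.1
  have htcard : typ S = (PF S \ {f}).ncard + 1 :=
    (Set.ncard_diff_singleton_add_one hPFf hPFfin).symm
  have hBge : (PF S \ {f}).ncard ≤ B.ncard := Set.ncard_le_ncard hPF'B hBfin
  have hRHS_iff : (∀ h, h ∉ S → (f - h ∈ S ∨ f - h ∈ PF S)) ↔ B = PF S \ {f} := by
    constructor
    · intro hR
      refine Set.Subset.antisymm ?_ hPF'B
      rintro h ⟨hh1, hh2⟩
      have hrec := hR (f - h) hh2
      rw [hsub_sub (hgap hh1)] at hrec
      rcases hrec with h' | h'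
      · exact absurd h' hh1
      · refine ⟨h', fun hhf => ?_⟩
        have : h = f := hhf
        exact hfB (this ▸ (⟨hh1, hh2⟩ : h ∈ B))
    · intro hBe h hh
      by_cases hfh : f - h ∈ S
      · exact Or.inl hfh
      · right
        have hmem : f - h ∈ B := ⟨hfh, by rw [hsub_sub (hgap hh)]; exact hh⟩
        rw [hBe] at hmem
        exact hmem.1
  have hnum_iff : B = PF S \ {f} ↔ 2 * genus S + 1 = typ S + ∏ i, (f i + 1) := by
    constructor
    · intro hBe
      have : B.ncard = (PF S \ {f}).ncard := by rw [hBe]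
      omega
    · intro he
      have hc : (PF S \ {f}).ncard = B.ncard := by omega
      exact (Set.eq_of_subset_of_ncard_le hPF'B (le_of_eq hc.symm) hBfin).symm
  rw [hRHS_iff, hnum_iff]
  constructor
  · rintro ⟨h, hh, he⟩
    have hle := hgap hh
    have hprod : ∏ i, (h i + 1) ≤ ∏ i, (f i + 1) :=
      Finset.prod_le_prod (fun _ _ => Nat.zero_le _) (fun i _ => by have h9 : h i ≤ f i := hle i; omega)
    omega
  · intro hR
    exact ⟨f, hfS, hR⟩

end Aux

/-- A Frobenius GNS `(S, f)` is almost symmetric iff for every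
`h ∈ Z_S ∖ S` (in `ℤ^d`), either `f - h ∈ S` or `f - h ∈ PF(S)`. -/
theorem statement6 (d : ℕ) (hd : 0 < d) (S : Set (Fin d → ℕ)) (hS : IsGNS S)
    (f : Fin d → ℕ) (hf : IsFrobenius S f) :
    AlmostSymmetric S ↔
      ∀ h : Fin d → ℤ,
        ((∀ i, h i ≤ (f i : ℤ)) ∨ (∀ i, 0 ≤ h i)) →
        (¬ ∃ s ∈ S, (fun i => (s i : ℤ)) = h) →
        ((∃ s ∈ S, (fun i => (s i : ℤ)) = fun i => (f i : ℤ) - h i) ∨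
         (∃ p ∈ PF S, (fun i => (p i : ℤ)) = fun i => (f i : ℤ) - h i)) := by
  rw [natChar hS hf]
  constructor
  · intro hR h hcase hnotS
    by_cases hpos : ∀ i, 0 ≤ h i
    · have hcoe : ∀ i, (((h i).toNat : ℕ) : ℤ) = h i := fun i => Int.toNat_of_nonneg (hpos i)
      set hn : Fin d → ℕ := fun i => (h i).toNat with hhn
      have hnS : hn ∉ S := fun hmem => hnotS ⟨hn, hmem, funext hcoe⟩
      have hle := gap_le_frob hS hf hnS
      have hcoe2 : ∀ i, (hn i : ℤ) = h i := hcoe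
      have heq : (fun i => (((f - hn) i : ℕ) : ℤ)) = fun i => (f i : ℤ) - h i := by
        funext i
        have h1 : hn i ≤ f i := hle i
        have h2 := hcoe2 i
        show (((f i - hn i : ℕ)) : ℤ) = (f i : ℤ) - h i
        omega
      rcases hR hn hnS with hs | hs
      · exact Or.inl ⟨f - hn, hs, heq⟩
      · exact Or.inr ⟨f - hn, hs, heq⟩
    · have hle : ∀ i, h i ≤ (f i : ℤ) := hcase.resolve_right hpos
      set x : Fin d → ℕ := fun i => ((f i : ℤ) - h i).toNat with hx
      have hxcoe : ∀ i, ((x i : ℕ) : ℤ) = (f i : ℤ) - h i :=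
        fun i => Int.toNat_of_nonneg (by have := hle i; omega)
      have hxS : x ∈ S := by
        by_contra hxn
        apply hpos
        intro i
        have h1 : x i ≤ f i := gap_le_frob hS hf hxn i
        have h2 := hxcoe i
        omega
      exact Or.inl ⟨x, hxS, funext fun i => hxcoe i⟩
  · intro hR h hh
    have hle := gap_le_frob hS hf hh
    have hnotS : ¬ ∃ s ∈ S, (fun i => (s i : ℤ)) = fun i => ((h i : ℕ) : ℤ) := by
      rintro ⟨s, hs, he⟩
      have : s = h := by
        funext i
        have h1 : (s i : ℤ) = (h i : ℤ) := congrFun he i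
        omega
      exact hh (this ▸ hs)
    rcases hR (fun i => (h i : ℤ)) (Or.inr fun i => Int.natCast_nonneg _) hnotS with
      ⟨s, hs, he⟩ | ⟨s, hs, he⟩
    · left
      have : s = f - h := by
        funext i
        have h1 : (s i : ℤ) = (f i : ℤ) - (h i : ℤ) := congrFun he i
        have h2 : h i ≤ f i := hle i
        show s i = f i - h i
        omega
      exact this ▸ hs
    · right
      have : s = f - h := by
        funext i
        have h1 : (s i : ℤ) = (f i : ℤ) - (h i : ℤ) := congrFun he i
        have h2 : h i ≤ f i := hle i
        show s i = f i - h i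
        omega
      exact this ▸ hs
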